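/- Let ω be the Chevalley involution of the sl₂-loop algebra L = sl₂ ⊗ k[t,t⁻¹] given by ω(p(t) ⊗ e) = p(t⁻¹) ⊗ f, ω(p(t) ⊗ f) = p(t⁻¹) ⊗ e, ω(p(t) ⊗ h) = −p(t⁻¹) ⊗ h. Then the elements c_l = (t^l − t^{−l}) ⊗ h (l ≥ 1) and b_m = t^m ⊗ e + t^{−m} ⊗ f (m ∈ ℤ) form a k-basis of the fixed-point subalgebra L^ω. -/

import Mathlib

open LaurentPolynomial

/-- coefficient functional -/
def coeffL (k : Type*) [Field k] (n : ℤ) : LaurentPolynomial k →ₗ[k] k where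
  toFun p := p.coeff n
  map_add' _ _ := rfl
  map_smul' _ _ := rfl

lemma invert_ksmul {k : Type*} [Field k] (a : k) (p : LaurentPolynomial k) :
    invert (a • p) = a • invert p := by
  ext n; simp

lemma smul_T_eq {k : Type*} [Field k] (a : k) (n : ℤ) :
    a • (T n : LaurentPolynomial k) = C a * T n := by
  rw [← single_eq_C_mul_T, T, AddMonoidAlgebra.smul_single, smul_eq_mul, mul_one]

section
variable {k : Type*} [Field k] {L : Type*} [AddCommGroup L]
  [Module (LaurentPolynomial k) L] [Module k L] [IsScalarTower k (LaurentPolynomial k) L]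
  (bas : Module.Basis (Fin 3) (LaurentPolynomial k) L)

lemma coord_zero (p q r : LaurentPolynomial k) :
    bas.coord 0 (p • bas 0 + q • bas 1 + r • bas 2) = p := by
  simp [Module.Basis.coord_apply, Finsupp.single_apply]

lemma coord_one (p q r : LaurentPolynomial k) :
    bas.coord 1 (p • bas 0 + q • bas 1 + r • bas 2) = q := by
  simp [Module.Basis.coord_apply, Finsupp.single_apply]

lemma coord_two (p q r : LaurentPolynomial k) :
    bas.coord 2 (p • bas 0 + q • bas 1 + r • bas 2) = r := by
  simp [Module.Basis.coord_apply, Finsupp.single_apply]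

lemma repr_eq (x : L) : x = bas.repr x 0 • bas 0 + bas.repr x 1 • bas 1 + bas.repr x 2 • bas 2 := by
  have := bas.sum_repr x
  rw [Fin.sum_univ_three] at this
  exact this.symm
end

section
variable {k : Type*} [Field k] {L : Type*} [AddCommGroup L]
  [Module (LaurentPolynomial k) L] [Module k L] [IsScalarTower k (LaurentPolynomial k) L]
  (bas : Module.Basis (Fin 3) (LaurentPolynomial k) L)

/-- coefficient of `T n` in the `bas j` coordinate, as a `k`-linear functional -/
noncomputable def phiL (j : Fin 3) (n : ℤ) : L →ₗ[k] k :=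
  (coeffL k n) ∘ₗ ((bas.coord j).restrictScalars k)

lemma phiL_smul (j i : Fin 3) (n : ℤ) (p : LaurentPolynomial k) :
    phiL bas j n (p • bas i) = if i = j then p.coeff n else 0 := by
  simp only [phiL, LinearMap.comp_apply, LinearMap.coe_restrictScalars, Module.Basis.coord_apply,
    map_smul, Module.Basis.repr_self, coeffL]
  by_cases hij : i = j <;>
    simp [Finsupp.smul_single, Finsupp.single_apply, hij, coeffL] <;> rfl

lemma indep : LinearIndependent k
    (Sum.elim (fun l : {l : ℤ // 0 < l} =>
        ((T l.1 - T (-l.1) : LaurentPolynomial k)) • bas 2)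
      (fun m : ℤ => (T m : LaurentPolynomial k) • bas 0 +
        (T (-m) : LaurentPolynomial k) • bas 1)) := by
  set v := Sum.elim (fun l : {l : ℤ // 0 < l} =>
        ((T l.1 - T (-l.1) : LaurentPolynomial k)) • bas 2)
      (fun m : ℤ => (T m : LaurentPolynomial k) • bas 0 +
        (T (-m) : LaurentPolynomial k) • bas 1) with hv
  rw [linearIndependent_iff']
  intro s g hsum i hi
  have key : ∀ (j : Fin 3) (n : ℤ), ∑ i' ∈ s, g i' * phiL bas j n (v i') = 0 := by
    intro j n
    have := congrArg (phiL bas j n) hsum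
    simpa [map_sum, map_smul, smul_eq_mul] using this
  rcases i with ⟨l, hl⟩ | m
  · have h1 := key 2 l
    have h2 : ∀ i' ∈ s, g i' * phiL bas 2 l (v i') =
        if i' = Sum.inl ⟨l, hl⟩ then g i' else 0 := by
      rintro (⟨l', hl'⟩ | m') _
      · simp only [hv, Sum.elim_inl, sub_smul, map_sub, phiL_smul]
        have hne : -l' ≠ l := by omega
        have hne2 : -l ≠ l := by omega
        by_cases hll : l' = l <;>
          simp [Finsupp.single_apply, hll, hne, hne2, Sum.inl.injEq, Subtype.mk.injEq]
      · simp only [hv, Sum.elim_inr, map_add, phiL_smul]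
        simp
    rw [Finset.sum_congr rfl h2, Finset.sum_ite_eq' s] at h1
    simpa [hi] using h1
  · have h1 := key 0 m
    have h2 : ∀ i' ∈ s, g i' * phiL bas 0 m (v i') =
        if i' = Sum.inr m then g i' else 0 := by
      rintro (⟨l', hl'⟩ | m') _
      · simp [hv, sub_smul, map_sub, phiL_smul]
      · simp only [hv, Sum.elim_inr, map_add, phiL_smul]
        by_cases hmm : m' = m <;> simp [Finsupp.single_apply, hmm, Sum.inr.injEq]
    rw [Finset.sum_congr rfl h2, Finset.sum_ite_eq' s] at h1
    simpa [hi] using h1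
end

section
variable {k : Type*} [Field k] [CharZero k] {L : Type*} [AddCommGroup L]
  [Module (LaurentPolynomial k) L] [Module k L] [IsScalarTower k (LaurentPolynomial k) L]
  (bas : Module.Basis (Fin 3) (LaurentPolynomial k) L)

lemma span_eq (ω : L →ₗ[k] L)
    (hωsmul : ∀ (p : LaurentPolynomial k) (x : L), ω (p • x) = invert p • ω x)
    (hω0 : ω (bas 0) = bas 1) (hω1 : ω (bas 1) = bas 0) (hω2 : ω (bas 2) = -bas 2) :
    Submodule.span k (Set.range (Sum.elim
        (fun l : {l : ℤ // 0 < l} =>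
          ((T l.1 - T (-l.1) : LaurentPolynomial k)) • bas 2)
        (fun m : ℤ => (T m : LaurentPolynomial k) • bas 0 +
          (T (-m) : LaurentPolynomial k) • bas 1))) =
      LinearMap.ker (ω - LinearMap.id) := by
  set v := Sum.elim
      (fun l : {l : ℤ // 0 < l} =>
        ((T l.1 - T (-l.1) : LaurentPolynomial k)) • bas 2)
      (fun m : ℤ => (T m : LaurentPolynomial k) • bas 0 +
        (T (-m) : LaurentPolynomial k) • bas 1) with hv
  set S := Submodule.span k (Set.range v) with hS
  have hT1 : ∀ n : ℤ, (T n : LaurentPolynomial k) • bas 0 +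
      (T (-n) : LaurentPolynomial k) • bas 1 ∈ S :=
    fun n => Submodule.subset_span ⟨Sum.inr n, rfl⟩
  have hT2 : ∀ n : ℤ, ((T n - T (-n) : LaurentPolynomial k)) • bas 2 ∈ S := by
    intro n
    rcases lt_trichotomy 0 n with hn | hn | hn
    · exact Submodule.subset_span ⟨Sum.inl ⟨n, hn⟩, rfl⟩
    · subst hn; simp
    · have h0 : ((T (-n) - T (-(-n)) : LaurentPolynomial k)) • bas 2 ∈ S :=
        Submodule.subset_span ⟨Sum.inl ⟨-n, by omega⟩, rfl⟩
      have := neg_mem h0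
      rwa [← neg_smul, neg_sub, neg_neg] at this
  have key1 : ∀ p : LaurentPolynomial k, p • bas 0 + invert p • bas 1 ∈ S := by
    intro p
    induction p using LaurentPolynomial.induction_on' with
    | add p q hp hq =>
      have : (p + q) • bas 0 + invert (p + q) • bas 1 =
          (p • bas 0 + invert p • bas 1) + (q • bas 0 + invert q • bas 1) := by
        rw [map_add, add_smul, add_smul]; abel
      rw [this]; exact add_mem hp hq
    | C_mul_T n a =>
      rw [← smul_T_eq, invert_ksmul, invert_T, smul_assoc, smul_assoc, ← smul_add]
      exact Submodule.smul_mem _ _ (hT1 n)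
  have key2 : ∀ p : LaurentPolynomial k, (p - invert p) • bas 2 ∈ S := by
    intro p
    induction p using LaurentPolynomial.induction_on' with
    | add p q hp hq =>
      have : (p + q - invert (p + q)) • bas 2 =
          (p - invert p) • bas 2 + (q - invert q) • bas 2 := by
        rw [map_add, ← add_smul]; congr 1; abel
      rw [this]; exact add_mem hp hq
    | C_mul_T n a =>
      rw [← smul_T_eq, invert_ksmul, invert_T, ← smul_sub, smul_assoc]
      exact Submodule.smul_mem _ _ (hT2 n)
  apply le_antisymm
  · rw [Submodule.span_le]
    rintro x ⟨(⟨l, hl⟩ | m), rfl⟩ <;>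
      simp only [hv, Sum.elim_inl, Sum.elim_inr, SetLike.mem_coe, LinearMap.mem_ker,
        LinearMap.sub_apply, LinearMap.id_apply, sub_eq_zero]
    · rw [hωsmul, map_sub, invert_T, invert_T, neg_neg, hω2, smul_neg, ← neg_smul, neg_sub]
    · rw [map_add, hωsmul, hωsmul, invert_T, invert_T, neg_neg, hω0, hω1, add_comm]
  · intro x hx
    rw [LinearMap.mem_ker, LinearMap.sub_apply, LinearMap.id_apply, sub_eq_zero] at hx
    set a := bas.repr x 0 with ha'
    set b := bas.repr x 1 with hb'
    set c := bas.repr x 2 with hc'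
    have hxe : x = a • bas 0 + b • bas 1 + c • bas 2 := repr_eq bas x
    have hωx : x = invert b • bas 0 + invert a • bas 1 + (-invert c) • bas 2 := by
      conv_lhs => rw [← hx, hxe]
      rw [map_add, map_add, hωsmul, hωsmul, hωsmul, hω0, hω1, hω2, smul_neg, ← neg_smul]
      abel
    have heq := hxe.symm.trans hωx
    have ha : a = invert b := by
      have := congrArg (bas.coord 0) heq
      rwa [coord_zero, coord_zero] at this
    have hb : b = invert a := by
      have := congrArg (bas.coord 1) heq
      rwa [coord_one, coord_one] at this
    have hc : c = -invert c := by
      have := congrArg (bas.coord 2) heq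
      rwa [coord_two, coord_two] at this
    have hinvc : invert c = -c := by
      conv_lhs => rw [hc, map_neg]
      rw [involutive_invert c]
    have hx2 : x = (a • bas 0 + invert a • bas 1) + (2⁻¹ : k) • ((c - invert c) • bas 2) := by
      rw [hinvc, sub_neg_eq_add, add_smul, ← two_smul k, smul_smul,
        inv_mul_cancel₀ (two_ne_zero : (2 : k) ≠ 0), one_smul, ← hb, hxe]
    rw [hx2]
    exact add_mem (key1 a) (Submodule.smul_mem _ _ (key2 c))
end


/-- Let `ω` be the Chevalley involution of the sl₂-loop algebra
`L = sl₂ ⊗ k[t,t⁻¹]` (axiomatized as the free `k[t,t⁻¹]`-module on `e, f, h` with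
`k[t,t⁻¹]`-bilinear bracket), determined by `ω(p(t) ⊗ e) = p(t⁻¹) ⊗ f`,
`ω(p(t) ⊗ f) = p(t⁻¹) ⊗ e`, `ω(p(t) ⊗ h) = -p(t⁻¹) ⊗ h`.  Then the elements
`c_l = (t^l - t^{-l}) ⊗ h` (`l ≥ 1`) and `b_m = t^m ⊗ e + t^{-m} ⊗ f` (`m ∈ ℤ`) form a
`k`-basis of the fixed-point subalgebra `L^ω`, i.e. they are linearly independent over `k`
and span `L^ω = ker (ω - id)`. -/
theorem stmt_7 {k : Type*} [Field k] [IsAlgClosed k] [CharZero k]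
    {L : Type*} [LieRing L] [LieAlgebra k L]
    [Module (LaurentPolynomial k) L] [IsScalarTower k (LaurentPolynomial k) L]
    (e f h : L)
    (bas : Module.Basis (Fin 3) (LaurentPolynomial k) L)
    (hbas : bas 0 = e ∧ bas 1 = f ∧ bas 2 = h)
    (hsmul : ∀ (p : LaurentPolynomial k) (x y : L), ⁅p • x, y⁆ = p • ⁅x, y⁆)
    (hef : ⁅e, f⁆ = h) (hhe : ⁅h, e⁆ = (2 : k) • e) (hhf : ⁅h, f⁆ = -((2 : k) • f))
    (ω : L →ₗ[k] L)
    (hωsmul : ∀ (p : LaurentPolynomial k) (x : L), ω (p • x) = invert p • ω x)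
    (hωe : ω e = f) (hωf : ω f = e) (hωh : ω h = -h) :
    let v : ({l : ℤ // 0 < l} ⊕ ℤ) → L :=
      Sum.elim (fun l => ((T l.1 - T (-l.1) : LaurentPolynomial k)) • h)
        (fun m => (T m : LaurentPolynomial k) • e + (T (-m) : LaurentPolynomial k) • f)
    LinearIndependent k v ∧
      Submodule.span k (Set.range v) = LinearMap.ker (ω - LinearMap.id) := by
  obtain ⟨hb0, hb1, hb2⟩ := hbas
  subst hb0 hb1 hb2
  intro v
  exact ⟨indep bas, span_eq bas ω hωsmul hωe hωf hωh⟩
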